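/- arXiv:1608.00803 — 5 statements merged into one kernel-verified Lean document; each statement's English description precedes it below -/
import Mathlib

section
/- Dedekind's lemma: Let O be an order in an étale ℚ-algebra A with maximal order O_A and conductor f. The map sending an integral O_A-ideal ã prime to f to ã ∩ O is a bijection from the set of integral O_A-ideals prime to f onto the set of integral O-ideals prime to f, with inverse a ↦ a·O_A. -/
section Aux

variable {A : Type*} [CommRing A] {O : Subalgebra ℤ A}

lemma condO_spec {c : O}
    (hc : c ∈ Ideal.span {x : O | ∀ y : integralClosure ℤ A, (x : A) * (y : A) ∈ O}) :
    ∀ y : integralClosure ℤ A, (c : A) * (y : A) ∈ O := by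
  induction hc using Submodule.span_induction with
  | mem x hx => exact hx
  | zero => intro y; simpa using O.zero_mem
  | add x y _ _ hx hy =>
    intro z
    push_cast
    rw [add_mul]
    exact add_mem (hx z) (hy z)
  | smul r x _ hx =>
    intro y
    have : ((r • x : O) : A) * (y : A) = (r : A) * ((x : A) * (y : A)) := by
      rw [smul_eq_mul]; push_cast; ring
    rw [this]
    exact mul_mem r.2 (hx y)

lemma condOA_spec {c : integralClosure ℤ A}
    (hc : c ∈ Ideal.span {x : integralClosure ℤ A |
        ∀ y : integralClosure ℤ A, (x : A) * (y : A) ∈ O}) :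
    ∀ y : integralClosure ℤ A, (c : A) * (y : A) ∈ O := by
  induction hc using Submodule.span_induction with
  | mem x hx => exact hx
  | zero => intro y; simpa using O.zero_mem
  | add x y _ _ hx hy =>
    intro z
    push_cast
    rw [add_mul]
    exact add_mem (hx z) (hy z)
  | smul r x _ hx =>
    intro y
    have : ((r • x : integralClosure ℤ A) : A) * (y : A)
        = (x : A) * ((r * y : integralClosure ℤ A) : A) := by
      rw [smul_eq_mul]; push_cast; ring
    rw [this]
    exact hx (r * y)

lemma map_mul_cond (hO : O ≤ integralClosure ℤ A) (a : Ideal O) {z : integralClosure ℤ A}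
    (hz : z ∈ Ideal.map (Subalgebra.inclusion hO) a) :
    ∀ c : O, (∀ y : integralClosure ℤ A, (c : A) * (y : A) ∈ O) →
      ∃ w ∈ a, Subalgebra.inclusion hO w = z * Subalgebra.inclusion hO c := by
  induction hz using Submodule.span_induction with
  | mem x hx =>
    obtain ⟨x0, hx0, rfl⟩ := hx
    intro c hc
    exact ⟨x0 * c, a.mul_mem_right c hx0, by rw [map_mul]⟩
  | zero => intro c _; exact ⟨0, a.zero_mem, by simp⟩
  | add x y _ _ hx hy =>
    intro c hc
    obtain ⟨w1, hw1, he1⟩ := hx c hc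
    obtain ⟨w2, hw2, he2⟩ := hy c hc
    exact ⟨w1 + w2, a.add_mem hw1 hw2, by rw [map_add, he1, he2, add_mul]⟩
  | smul r x _ hx =>
    intro c hc
    have hrc : (c : A) * (r : A) ∈ O := hc r
    set c' : O := ⟨(c : A) * (r : A), hrc⟩ with hc'def
    have hc'cond : ∀ y : integralClosure ℤ A, (c' : A) * (y : A) ∈ O := by
      intro y
      have : (c' : A) * (y : A) = (c : A) * ((r * y : integralClosure ℤ A) : A) := by
        simp only [hc'def]; push_cast; ring
      rw [this]; exact hc (r * y)
    obtain ⟨w, hw, he⟩ := hx c' hc'cond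
    refine ⟨w, hw, ?_⟩
    rw [he, smul_eq_mul]
    apply Subtype.ext
    push_cast [Subalgebra.coe_inclusion]
    ring

end Aux


/-- Dedekind's lemma: let `O` be an order in an étale `ℚ`-algebra `A`
(a finite-dimensional reduced commutative `ℚ`-algebra) with maximal order
`O_A = integralClosure ℤ A` and conductor `f = {γ ∈ A : γ·O_A ⊆ O}`.
The map `J ↦ J ∩ O` is a bijection from the set of integral `O_A`-ideals
prime to `f` onto the set of integral `O`-ideals prime to `f`, with inverse
`a ↦ a·O_A`.  (Here `J ∩ O` is `Ideal.comap` and `a·O_A` is `Ideal.map`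
along the inclusion `O → O_A`, and "prime to `f`" means `ideal + f = (1)`.) -/
theorem dedekind_conductor_bijection
    (A : Type*) [CommRing A] [Algebra ℚ A] [IsReduced A] [FiniteDimensional ℚ A]
    (O : Subalgebra ℤ A) (hO : O ≤ integralClosure ℤ A)
    (hfull : Submodule.span ℚ (O : Set A) = ⊤)
    (hfg : (Subalgebra.toSubmodule O).FG) :
    (∀ J : Ideal (integralClosure ℤ A),
      J ⊔ Ideal.span {x : integralClosure ℤ A |
          ∀ y : integralClosure ℤ A, (x : A) * (y : A) ∈ O} = ⊤ →
      (Ideal.comap (Subalgebra.inclusion hO) J ⊔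
          Ideal.span {x : O | ∀ y : integralClosure ℤ A, (x : A) * (y : A) ∈ O}
        = ⊤ ∧
       Ideal.map (Subalgebra.inclusion hO)
          (Ideal.comap (Subalgebra.inclusion hO) J) = J)) ∧
    (∀ a : Ideal O,
      a ⊔ Ideal.span {x : O | ∀ y : integralClosure ℤ A, (x : A) * (y : A) ∈ O}
        = ⊤ →
      (Ideal.map (Subalgebra.inclusion hO) a ⊔
          Ideal.span {x : integralClosure ℤ A |
            ∀ y : integralClosure ℤ A, (x : A) * (y : A) ∈ O} = ⊤ ∧
       Ideal.comap (Subalgebra.inclusion hO)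
          (Ideal.map (Subalgebra.inclusion hO) a) = a)) := by
  set ι := Subalgebra.inclusion hO with hι
  constructor
  · intro J hJ
    have h1 : (1 : integralClosure ℤ A) ∈ J ⊔ Ideal.span {x : integralClosure ℤ A |
        ∀ y : integralClosure ℤ A, (x : A) * (y : A) ∈ O} := by
      rw [hJ]; trivial
    obtain ⟨j, hj, c, hc, hjc⟩ := Submodule.mem_sup.mp h1
    have hccond := condOA_spec hc
    have hcO : (c : A) ∈ O := by simpa using hccond 1
    have hjcA : (j : A) + (c : A) = 1 := by
      have := congrArg (Subtype.val) hjc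
      push_cast at this
      exact this
    have hjO : (j : A) ∈ O := by
      have : (j : A) = 1 - (c : A) := eq_sub_of_add_eq hjcA
      rw [this]; exact O.sub_mem O.one_mem hcO
    set jO : O := ⟨(j : A), hjO⟩ with hjOdef
    set cO : O := ⟨(c : A), hcO⟩ with hcOdef
    have hιj : ι jO = j := Subtype.ext (by simp [hι, hjOdef])
    have hιc : ι cO = c := Subtype.ext (by simp [hι, hcOdef])
    have hjmem : jO ∈ Ideal.comap ι J := by
      rw [Ideal.mem_comap, hιj]; exact hj
    have hcmem : cO ∈ Ideal.span {x : O | ∀ y : integralClosure ℤ A, (x : A) * (y : A) ∈ O} :=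
      Ideal.subset_span (fun y => hccond y)
    have hsum : jO + cO = 1 := Subtype.ext (by push_cast; exact hjcA)
    constructor
    · rw [Ideal.eq_top_iff_one, ← hsum]
      exact Submodule.add_mem_sup hjmem hcmem
    · refine le_antisymm Ideal.map_comap_le ?_
      intro x hx
      have hx1 : x = x * j + x * c := by rw [← mul_add, hjc, mul_one]
      rw [hx1]
      apply add_mem
      · rw [← hιj]
        exact Ideal.mul_mem_left _ x (Ideal.mem_map_of_mem ι hjmem)
      · have hxcO : ((x * c : integralClosure ℤ A) : A) ∈ O := by
          have : ((x * c : integralClosure ℤ A) : A) = (c : A) * (x : A) := by push_cast; ring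
          rw [this]; exact hccond x
        set u : O := ⟨_, hxcO⟩ with hudef
        have hιu : ι u = x * c := Subtype.ext (by simp [hι, hudef])
        have humem : u ∈ Ideal.comap ι J := by
          rw [Ideal.mem_comap, hιu]; exact J.mul_mem_right c hx
        rw [← hιu]
        exact Ideal.mem_map_of_mem ι humem
  · intro a ha
    have h1 : (1 : O) ∈ a ⊔ Ideal.span {x : O | ∀ y : integralClosure ℤ A, (x : A) * (y : A) ∈ O} := by
      rw [ha]; trivial
    obtain ⟨a0, ha0, c, hc, hsum⟩ := Submodule.mem_sup.mp h1
    have hccond := condO_spec hc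
    constructor
    · have hιmem : ι a0 ∈ Ideal.map ι a := Ideal.mem_map_of_mem ι ha0
      have hιc : ι c ∈ Ideal.span {x : integralClosure ℤ A |
          ∀ y : integralClosure ℤ A, (x : A) * (y : A) ∈ O} := by
        apply Ideal.subset_span
        intro y
        rw [show ((ι c : integralClosure ℤ A) : A) = (c : A) from Subalgebra.coe_inclusion hO c]
        exact hccond y
      rw [Ideal.eq_top_iff_one]
      have : (1 : integralClosure ℤ A) = ι a0 + ι c := by rw [← map_add, hsum, map_one]
      rw [this]
      exact Submodule.add_mem_sup hιmem hιc
    · refine le_antisymm ?_ Ideal.le_comap_map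
      intro x hx
      rw [Ideal.mem_comap] at hx
      obtain ⟨w, hw, he⟩ := map_mul_cond hO a hx c hccond
      have hxc : x * c = w := Subalgebra.inclusion_injective hO (by rw [map_mul, ← he])
      have hx1 : x = x * a0 + w := by
        calc x = x * (a0 + c) := by rw [hsum, mul_one]
        _ = x * a0 + x * c := by ring
        _ = x * a0 + w := by rw [hxc]
      rw [hx1]
      exact add_mem (a.mul_mem_left x ha0) hw
end

section
/- Modular law for quadratic orders: Let k be a quadratic étale ℚ-algebra with maximal order O_k, let O_{k,m} = ℤ·1 + m·O_k, let a be an integral ideal of O_{k,m}, and let c be the smallest positive integer in a + m·O_k. Then c divides m, and setting m' = m/c one has a + m·O_k = c·O_{k,m'}, and c⁻¹·a·O_{k,m'} is an integral O_{k,m'}-ideal prime to the conductor m'·O_k of O_{k,m'}. -/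
/-- The maximal order `O_k = integralClosure ℤ k`, viewed as a `ℤ`-submodule. -/
noncomputable def maxOrder (K : Type*) [CommRing K] : Submodule ℤ K :=
  Subalgebra.toSubmodule (integralClosure ℤ K)

/-- The order `O_{k,m} = ℤ·1 + m·O_k` of conductor `m`. -/
noncomputable def quadOrder (K : Type*) [CommRing K] (m : ℕ) : Submodule ℤ K :=
  Submodule.span ℤ {(1 : K)} ⊔ Submodule.span ℤ {(m : K)} * maxOrder K

open Submodule

private lemma spanSingMul {K : Type*} [CommRing K] (x y : K) :
    span ℤ {x} * span ℤ {y} = span ℤ {x * y} := by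
  rw [span_mul_span, Set.singleton_mul_singleton]

private lemma one_mem_maxOrder (K : Type*) [CommRing K] : (1 : K) ∈ maxOrder K :=
  (integralClosure ℤ K).one_mem

private lemma maxOrder_mul_le (K : Type*) [CommRing K] :
    maxOrder K * maxOrder K ≤ maxOrder K := by
  rw [Submodule.mul_le]
  intro x hx y hy
  exact Subalgebra.mul_mem _ hx hy

private lemma span_natCast_le_one (K : Type*) [CommRing K] (n : ℕ) :
    span ℤ {(n : K)} ≤ 1 := by
  rw [one_eq_span, span_le, Set.singleton_subset_iff]
  exact mem_span_singleton.mpr ⟨(n : ℤ), by simp⟩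

private lemma one_mem_quadOrder (K : Type*) [CommRing K] (n : ℕ) :
    (1 : K) ∈ quadOrder K n :=
  mem_sup_left (mem_span_singleton_self 1)

private lemma conductor_le_quadOrder (K : Type*) [CommRing K] (n : ℕ) :
    span ℤ {(n : K)} * maxOrder K ≤ quadOrder K n :=
  le_sup_right

private lemma quadOrder_mul_le (K : Type*) [CommRing K] (n : ℕ) :
    quadOrder K n * quadOrder K n ≤ quadOrder K n := by
  have h1 : span ℤ {(1 : K)} = 1 := one_eq_span.symm
  rw [quadOrder, h1, Submodule.sup_mul, Submodule.mul_sup, Submodule.mul_sup, one_mul, one_mul, mul_one]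
  have hSS : (span ℤ {(n : K)} * maxOrder K) * (span ℤ {(n : K)} * maxOrder K)
      ≤ span ℤ {(n : K)} * maxOrder K := by
    calc (span ℤ {(n : K)} * maxOrder K) * (span ℤ {(n : K)} * maxOrder K)
        = (span ℤ {(n : K)} * span ℤ {(n : K)}) * (maxOrder K * maxOrder K) := by ring
      _ ≤ (1 * span ℤ {(n : K)}) * maxOrder K :=
          mul_le_mul' (mul_le_mul' (span_natCast_le_one K n) le_rfl)
            (maxOrder_mul_le K)
      _ = span ℤ {(n : K)} * maxOrder K := by rw [one_mul]
  refine sup_le (sup_le le_sup_left le_sup_right) (sup_le le_sup_right ?_)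
  exact hSS.trans le_sup_right

/-- Modular law for quadratic orders: let `k` be a quadratic étale `ℚ`-algebra
(a reduced `ℚ`-algebra of dimension 2), `O_{k,m} = ℤ·1 + m·O_k`, let `a` be an
integral ideal of `O_{k,m}`, and let `c` be the smallest positive integer with
`c·1 ∈ a + m·O_k`.  Then `c ∣ m`, and with `m' = m/c` one has
`a + m·O_k = c·O_{k,m'}`, and `c⁻¹·a·O_{k,m'}` is an integral
`O_{k,m'}`-ideal prime to the conductor `m'·O_k` of `O_{k,m'}`. -/
theorem quad_order_modular_law
    (K : Type*) [CommRing K] [Algebra ℚ K] [IsReduced K]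
    (hrank : Module.finrank ℚ K = 2)
    (m : ℕ) (hm : 0 < m)
    (a : Submodule ℤ K) (hle : a ≤ quadOrder K m)
    (hideal : quadOrder K m * a ≤ a)
    (c : ℕ) (hc : 0 < c)
    (hmem : ((c : K)) ∈ a ⊔ Submodule.span ℤ {(m : K)} * maxOrder K)
    (hmin : ∀ c' : ℕ, 0 < c' →
      ((c' : K)) ∈ a ⊔ Submodule.span ℤ {(m : K)} * maxOrder K → c ≤ c') :
    c ∣ m ∧
    a ⊔ Submodule.span ℤ {(m : K)} * maxOrder K
      = Submodule.span ℤ {(c : K)} * quadOrder K (m / c) ∧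
    (Submodule.span ℤ {algebraMap ℚ K ((c : ℚ)⁻¹)} * (a * quadOrder K (m / c))
        ≤ quadOrder K (m / c) ∧
      quadOrder K (m / c) *
          (Submodule.span ℤ {algebraMap ℚ K ((c : ℚ)⁻¹)} *
            (a * quadOrder K (m / c)))
        ≤ Submodule.span ℤ {algebraMap ℚ K ((c : ℚ)⁻¹)} *
            (a * quadOrder K (m / c)) ∧
      Submodule.span ℤ {algebraMap ℚ K ((c : ℚ)⁻¹)} * (a * quadOrder K (m / c))
          ⊔ Submodule.span ℤ {((m / c : ℕ) : K)} * maxOrder K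
        = quadOrder K (m / c)) := by
  classical
  set b := a ⊔ Submodule.span ℤ {(m : K)} * maxOrder K with hbdef
  -- Step A: every integer landing in `b` is divisible by `c`.
  have hdvd : ∀ n : ℤ, ((n : ℤ) : K) ∈ b → (c : ℤ) ∣ n := by
    intro n hn
    set g : ℕ := Int.gcd (c : ℤ) n with hg
    have hgc : (g : ℤ) ∣ (c : ℤ) := Int.gcd_dvd_left _ _
    have hgn : (g : ℤ) ∣ n := Int.gcd_dvd_right _ _
    have hgpos : 0 < g := Int.gcd_pos_of_ne_zero_left n (by exact_mod_cast hc.ne')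
    have hbez : (g : ℤ) = (c : ℤ) * Int.gcdA (c : ℤ) n + n * Int.gcdB (c : ℤ) n :=
      Int.gcd_eq_gcd_ab _ _
    have hgK : ((g : ℕ) : K) ∈ b := by
      have h1 : (((g : ℤ)) : K) ∈ b := by
        rw [hbez]
        push_cast
        refine add_mem ?_ ?_
        · simpa [zsmul_eq_mul, mul_comm] using b.smul_mem (Int.gcdA (c : ℤ) n) hmem
        · simpa [zsmul_eq_mul, mul_comm] using b.smul_mem (Int.gcdB (c : ℤ) n) hn
      exact_mod_cast h1
    have hcg : c ≤ g := hmin g hgpos hgK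
    have hgc' : g ≤ c := Nat.le_of_dvd hc (by exact_mod_cast hgc)
    have : g = c := le_antisymm hgc' hcg
    rw [← this]
    exact hgn
  -- Step B: `c ∣ m`.
  have hmb : ((m : ℕ) : K) ∈ b := by
    refine mem_sup_right ?_
    simpa using mul_mem_mul (mem_span_singleton_self ((m : K))) (one_mem_maxOrder K)
  have hcm : c ∣ m := by
    have := hdvd (m : ℤ) (by exact_mod_cast hmb)
    exact_mod_cast this
  have hcm' : c * (m / c) = m := Nat.mul_div_cancel' hcm
  have hcmK : (c : K) * ((m / c : ℕ) : K) = (m : K) := by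
    conv_rhs => rw [← hcm']
    push_cast; ring
  -- Step C: `b = c · O_{k,m/c}`.
  have hrhs : Submodule.span ℤ {(c : K)} * quadOrder K (m / c)
      = Submodule.span ℤ {(c : K)} ⊔ Submodule.span ℤ {(m : K)} * maxOrder K := by
    rw [quadOrder, Submodule.mul_sup, spanSingMul, mul_one, ← mul_assoc, spanSingMul, hcmK]
  have hkey : b = Submodule.span ℤ {(c : K)} ⊔ Submodule.span ℤ {(m : K)} * maxOrder K := by
    apply le_antisymm
    · rw [hbdef]
      refine sup_le ?_ le_sup_right
      intro x hx
      have hxq := hle hx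
      rw [quadOrder] at hxq
      obtain ⟨u, hu, v, hv, rfl⟩ := mem_sup.mp hxq
      obtain ⟨t, rfl⟩ := mem_span_singleton.mp hu
      have hv' : v ∈ b := mem_sup_right hv
      have htb : ((t : ℤ) : K) ∈ b := by
        have heq : ((t : ℤ) : K) = (t • (1 : K) + v) - v := by simp [zsmul_eq_mul]
        rw [heq]
        exact sub_mem (mem_sup_left hx) hv'
      obtain ⟨s, hs⟩ := hdvd t htb
      have hu' : t • (1 : K) ∈ Submodule.span ℤ {(c : K)} := by
        refine mem_span_singleton.mpr ⟨s, ?_⟩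
        rw [zsmul_eq_mul, zsmul_eq_mul, mul_one, hs]
        push_cast
        ring
      exact add_mem_sup hu' hv
    · exact sup_le (span_le.mpr (Set.singleton_subset_iff.mpr hmem)) le_sup_right
  have hconj2 : b = Submodule.span ℤ {(c : K)} * quadOrder K (m / c) :=
    hkey.trans hrhs.symm
  -- Step D
  set cinv : K := algebraMap ℚ K ((c : ℚ)⁻¹) with hcinvdef
  have hcinvc : cinv * (c : K) = 1 := by
    have h1 : ((c : ℕ) : K) = algebraMap ℚ K ((c : ℕ) : ℚ) := by simp
    rw [hcinvdef, h1, ← map_mul, inv_mul_cancel₀ (by exact_mod_cast hc.ne'), map_one]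
  have hspan1 : Submodule.span ℤ {cinv} * Submodule.span ℤ {(c : K)} = 1 := by
    rw [spanSingMul, hcinvc]
    exact one_eq_span.symm
  have hQQ : quadOrder K (m / c) * quadOrder K (m / c) ≤ quadOrder K (m / c) :=
    quadOrder_mul_le K (m / c)
  have ha_le : a ≤ Submodule.span ℤ {(c : K)} * quadOrder K (m / c) := by
    rw [← hconj2]; exact le_sup_left
  have h3a : Submodule.span ℤ {cinv} * (a * quadOrder K (m / c)) ≤ quadOrder K (m / c) := by
    calc Submodule.span ℤ {cinv} * (a * quadOrder K (m / c))
        ≤ Submodule.span ℤ {cinv} *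
            ((Submodule.span ℤ {(c : K)} * quadOrder K (m / c)) * quadOrder K (m / c)) :=
          mul_le_mul' le_rfl (mul_le_mul' ha_le le_rfl)
      _ = (Submodule.span ℤ {cinv} * Submodule.span ℤ {(c : K)}) *
            (quadOrder K (m / c) * quadOrder K (m / c)) := by ring
      _ ≤ 1 * quadOrder K (m / c) := mul_le_mul' hspan1.le hQQ
      _ = quadOrder K (m / c) := one_mul _
  have h3b : quadOrder K (m / c) * (Submodule.span ℤ {cinv} * (a * quadOrder K (m / c)))
      ≤ Submodule.span ℤ {cinv} * (a * quadOrder K (m / c)) := by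
    calc quadOrder K (m / c) * (Submodule.span ℤ {cinv} * (a * quadOrder K (m / c)))
        = Submodule.span ℤ {cinv} * (a * (quadOrder K (m / c) * quadOrder K (m / c))) := by
          ring
      _ ≤ Submodule.span ℤ {cinv} * (a * quadOrder K (m / c)) :=
          mul_le_mul' le_rfl (mul_le_mul' le_rfl hQQ)
  have hm'O : Submodule.span ℤ {cinv} * (Submodule.span ℤ {(m : K)} * maxOrder K)
      = Submodule.span ℤ {((m / c : ℕ) : K)} * maxOrder K := by
    rw [← mul_assoc, spanSingMul]
    have heq : cinv * (m : K) = ((m / c : ℕ) : K) := by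
      rw [← hcmK, ← mul_assoc, hcinvc, one_mul]
    rw [heq]
  have h3c : Submodule.span ℤ {cinv} * (a * quadOrder K (m / c))
      ⊔ Submodule.span ℤ {((m / c : ℕ) : K)} * maxOrder K = quadOrder K (m / c) := by
    apply le_antisymm
    · exact sup_le h3a (conductor_le_quadOrder K (m / c))
    · conv_lhs => rw [quadOrder]
      refine sup_le ?_ le_sup_right
      rw [span_le, Set.singleton_subset_iff]
      rw [hbdef] at hmem
      obtain ⟨x, hx, v, hv, hxv⟩ := mem_sup.mp hmem
      have h1eq : (1 : K) = cinv * x + cinv * v := by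
        rw [← mul_add, hxv, hcinvc]
      rw [h1eq]
      refine add_mem_sup ?_ ?_
      · refine mul_mem_mul (mem_span_singleton_self _) ?_
        simpa using mul_mem_mul hx (one_mem_quadOrder K (m / c))
      · have hvmem := mul_mem_mul (mem_span_singleton_self cinv) hv
        rwa [hm'O] at hvmem
  exact ⟨hcm, hconj2, h3a, h3b, h3c⟩
end

section
/- For m a positive integer, the ideal class group of the order O_{ℚ²,m} = ℤ·(1,1) + m·(ℤ × ℤ) in ℚ × ℚ is isomorphic to (ℤ/mℤ)* / {±1}, via the map sending the class of the ideal a_t = ℤ·(1,t) + ℤ·(0,m) (for t prime to m) to ±t mod m. -/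
open Submodule


/-- `a` is an invertible fractional ideal of the order `O`. -/
def IsInvertibleIdeal {K : Type*} [CommRing K] (O a : Submodule ℤ K) : Prop :=
  O * a = a ∧ ∃ b : Submodule ℤ K, O * b = b ∧ a * b = O

/-- The ideal `a_t = ℤ·(1,t) + ℤ·(0,m)` of `O_{ℚ²,m}`. -/
noncomputable def aIdeal (m : ℕ) (t : ℤ) : Submodule ℤ (ℚ × ℚ) :=
  Submodule.span ℤ {((1 : ℚ), (t : ℚ))} ⊔ Submodule.span ℤ {((0 : ℚ), (m : ℚ))}

namespace QuadSplit

abbrev sp (u : ℚ × ℚ) : Submodule ℤ (ℚ × ℚ) := Submodule.span ℤ {u}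

lemma smul_pair (a : ℤ) (x y : ℚ) : a • ((x, y) : ℚ × ℚ) = ((a : ℚ) * x, (a : ℚ) * y) := by
  simp [Prod.smul_mk, zsmul_eq_mul]

lemma mem_sup_span_pair {u v z : ℚ × ℚ} :
    z ∈ sp u ⊔ sp v ↔ ∃ a b : ℤ, a • u + b • v = z := by
  rw [← Submodule.span_union, Set.singleton_union, Submodule.mem_span_pair]

lemma sp_mul_sp (u v : ℚ × ℚ) : sp u * sp v = sp (u * v) := by
  rw [Submodule.span_mul_span, Set.singleton_mul_singleton]

lemma sup_mul_sup (u v w z : ℚ × ℚ) :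
    (sp u ⊔ sp v) * (sp w ⊔ sp z) =
      (sp (u*w) ⊔ sp (u*z)) ⊔ (sp (v*w) ⊔ sp (v*z)) := by
  rw [Submodule.sup_mul, Submodule.mul_sup, Submodule.mul_sup, sp_mul_sp, sp_mul_sp,
    sp_mul_sp, sp_mul_sp]

lemma sp0_le_sp0 {a b : ℤ} (h : b ∣ a) :
    sp ((0 : ℚ), (a : ℚ)) ≤ sp ((0 : ℚ), (b : ℚ)) := by
  obtain ⟨k, rfl⟩ := h
  rw [Submodule.span_singleton_le_iff_mem, Submodule.mem_span_singleton]
  exact ⟨k, by rw [smul_pair]; push_cast; ring_nf⟩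

end QuadSplit

namespace QuadSplit

/-- `ℤ × ℤ` as a lattice. -/
noncomputable abbrev Z2 : Submodule ℤ (ℚ × ℚ) := sp (1, 0) ⊔ sp (0, 1)

lemma mem_Z2 {z : ℚ × ℚ} : z ∈ Z2 ↔ ∃ a b : ℤ, z = ((a : ℚ), (b : ℚ)) := by
  rw [mem_sup_span_pair]
  constructor
  · rintro ⟨a, b, rfl⟩
    exact ⟨a, b, by rw [smul_pair, smul_pair]; simp⟩
  · rintro ⟨a, b, rfl⟩
    exact ⟨a, b, by rw [smul_pair, smul_pair]; simp⟩

lemma maxOrder_eq : maxOrder (ℚ × ℚ) = Z2 := by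
  apply le_antisymm
  · intro z hz
    have hz' : IsIntegral ℤ z := hz
    have h1 : IsIntegral ℤ z.1 := hz'.map (AlgHom.fst ℤ ℚ ℚ)
    have h2 : IsIntegral ℤ z.2 := hz'.map (AlgHom.snd ℤ ℚ ℚ)
    obtain ⟨a, ha⟩ := IsIntegrallyClosed.isIntegral_iff.mp h1
    obtain ⟨b, hb⟩ := IsIntegrallyClosed.isIntegral_iff.mp h2
    rw [mem_Z2]
    exact ⟨a, b, by ext <;> simp [← ha, ← hb]⟩
  · rw [sup_le_iff]
    constructor <;> rw [Submodule.span_singleton_le_iff_mem] <;>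
      refine ⟨Polynomial.X ^ 2 - Polynomial.X, ?_, ?_⟩
    · apply Polynomial.monic_X_pow_sub
      simpa using Polynomial.degree_X_le
    · ext <;> simp
    · apply Polynomial.monic_X_pow_sub
      simpa using Polynomial.degree_X_le
    · ext <;> simp

end QuadSplit

namespace QuadSplit
variable (m : ℕ)

lemma mem_aIdeal {m : ℕ} {t : ℤ} {z : ℚ × ℚ} :
    z ∈ aIdeal m t ↔ ∃ a b : ℤ, z = ((a : ℚ), (a : ℚ) * t + (b : ℚ) * m) := by
  rw [aIdeal, mem_sup_span_pair]
  constructor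
  · rintro ⟨a, b, rfl⟩
    exact ⟨a, b, by rw [smul_pair, smul_pair]; ext <;> simp⟩
  · rintro ⟨a, b, rfl⟩
    exact ⟨a, b, by rw [smul_pair, smul_pair]; ext <;> simp⟩

lemma quadOrder_eq : quadOrder (ℚ × ℚ) m = aIdeal m 1 := by
  have hcast : ((m : ℚ × ℚ)) = (((m : ℚ), (m : ℚ)) : ℚ × ℚ) := by
    ext <;> simp
  rw [quadOrder, maxOrder_eq, hcast, Submodule.mul_sup, sp_mul_sp, sp_mul_sp]
  have h1 : ((((m : ℚ), (m : ℚ)) : ℚ × ℚ) * (1, 0)) = (((m : ℚ), 0) : ℚ × ℚ) := by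
    ext <;> simp
  have h2 : ((((m : ℚ), (m : ℚ)) : ℚ × ℚ) * (0, 1)) = (((0 : ℚ), (m : ℚ)) : ℚ × ℚ) := by
    ext <;> simp
  rw [h1, h2]
  apply le_antisymm
  · refine sup_le ?_ (sup_le ?_ ?_) <;> rw [Submodule.span_singleton_le_iff_mem, mem_aIdeal]
    · exact ⟨1, 0, by push_cast; ext <;> simp [Prod.fst_one, Prod.snd_one]⟩
    · exact ⟨m, -1, by push_cast; ext <;> simp⟩
    · exact ⟨0, 1, by push_cast; ext <;> simp⟩
  · rw [aIdeal]
    refine sup_le ?_ ?_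
    · have h3 : (((1 : ℚ), ((1 : ℤ) : ℚ)) : ℚ × ℚ) = (1 : ℚ × ℚ) := by ext <;> simp
      rw [Submodule.span_singleton_le_iff_mem, h3]
      exact Submodule.mem_sup_left (Submodule.mem_span_singleton_self _)
    · rw [Submodule.span_singleton_le_iff_mem]
      exact Submodule.mem_sup_right (Submodule.mem_sup_right (Submodule.mem_span_singleton_self _))

lemma mem_O {z : ℚ × ℚ} : z ∈ quadOrder (ℚ × ℚ) m ↔
    ∃ a b : ℤ, z = ((a : ℚ), (a : ℚ) + (b : ℚ) * m) := by
  rw [quadOrder_eq, mem_aIdeal]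
  simp

end QuadSplit

namespace QuadSplit

lemma map_sp (f : (ℚ × ℚ) →ₗ[ℤ] ℚ) (u : ℚ × ℚ) :
    (sp u).map f = Submodule.span ℤ {f u} := by
  rw [Submodule.map_span, Set.image_singleton]

lemma principal_of_le {c : ℚ} {N : Submodule ℤ ℚ} (h : N ≤ Submodule.span ℤ {c}) :
    ∃ d : ℚ, N = Submodule.span ℤ {d} := by
  set f := LinearMap.toSpanSingleton ℤ ℚ c with hf
  have hr : LinearMap.range f = Submodule.span ℤ {c} := by
    ext y
    simp [hf, LinearMap.mem_range, Submodule.mem_span_singleton,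
      LinearMap.toSpanSingleton_apply]
  have hle : N ≤ LinearMap.range f := by rw [hr]; exact h
  obtain ⟨g, hg⟩ := IsPrincipalIdealRing.principal ((N.comap f : Submodule ℤ ℤ) : Ideal ℤ)
  refine ⟨g • c, ?_⟩
  have h2 : N = (N.comap f).map f := (Submodule.map_comap_eq_self hle).symm
  have h3 : (N.comap f : Submodule ℤ ℤ) = Submodule.span ℤ {g} := by
    rw [hg]
  rw [h2, h3, Submodule.map_span, Set.image_singleton, LinearMap.toSpanSingleton_apply]

lemma one_mem_O (m : ℕ) : (1 : ℚ × ℚ) ∈ quadOrder (ℚ × ℚ) m := by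
  rw [mem_O]
  exact ⟨1, 0, by ext <;> simp [Prod.fst_one, Prod.snd_one]⟩

lemma exists_span_eq (m : ℕ) (f : (ℚ × ℚ) →ₐ[ℤ] ℚ)
    (hfO : ∀ z ∈ quadOrder (ℚ × ℚ) m, ∃ n : ℤ, f z = (n : ℚ))
    (a b : Submodule ℤ (ℚ × ℚ)) (hab : a * b = quadOrder (ℚ × ℚ) m) :
    ∃ α : ℚ, α ≠ 0 ∧ a.map f.toLinearMap = Submodule.span ℤ {α} := by
  have h1 : (1 : ℚ × ℚ) ∈ a * b := by rw [hab]; exact one_mem_O m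
  -- an element of `a` with nonzero image
  have hex : ∃ x ∈ a, f x ≠ 0 := by
    by_contra hcon
    push_neg at hcon
    have : f (1 : ℚ × ℚ) = 0 := by
      refine Submodule.mul_induction_on h1 (fun x hx y _ => ?_) (fun x y hx hy => ?_)
      · rw [map_mul, hcon x hx, zero_mul]
      · rw [map_add, hx, hy, add_zero]
    simp at this
  have hey : ∃ y ∈ b, f y ≠ 0 := by
    by_contra hcon
    push_neg at hcon
    have : f (1 : ℚ × ℚ) = 0 := by
      refine Submodule.mul_induction_on h1 (fun x _ y hy => ?_) (fun x y hx hy => ?_)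
      · rw [map_mul, hcon y hy, mul_zero]
      · rw [map_add, hx, hy, add_zero]
    simp at this
  obtain ⟨x₀, hx₀, hx₀'⟩ := hex
  obtain ⟨y₀, hy₀, hy₀'⟩ := hey
  have hbound : a.map f.toLinearMap ≤ Submodule.span ℤ {(f y₀)⁻¹} := by
    rintro _ ⟨x, hx, rfl⟩
    have hxy : x * y₀ ∈ quadOrder (ℚ × ℚ) m := by
      rw [← hab]; exact Submodule.mul_mem_mul hx hy₀
    obtain ⟨n, hn⟩ := hfO _ hxy
    rw [Submodule.mem_span_singleton]
    refine ⟨n, ?_⟩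
    rw [map_mul] at hn
    have hfx : f x = (n : ℚ) * (f y₀)⁻¹ := by
      rw [← hn, mul_assoc, mul_inv_cancel₀ hy₀', mul_one]
    show n • (f y₀)⁻¹ = f.toLinearMap x
    rw [AlgHom.toLinearMap_apply, hfx]
    simp [zsmul_eq_mul]
  obtain ⟨d, hd⟩ := principal_of_le hbound
  refine ⟨d, ?_, hd⟩
  intro h0
  rw [h0] at hd
  have : f x₀ ∈ Submodule.span ℤ ({(0 : ℚ)} : Set ℚ) := by
    rw [← hd]; exact ⟨x₀, hx₀, rfl⟩
  simp [Submodule.mem_span_singleton] at this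
  exact hx₀' this

end QuadSplit

namespace QuadSplit

lemma mem_span_one {x : ℚ} : x ∈ Submodule.span ℤ {(1 : ℚ)} ↔ ∃ n : ℤ, (n : ℚ) = x := by
  rw [Submodule.mem_span_singleton]
  constructor
  · rintro ⟨n, rfl⟩; exact ⟨n, by simp [zsmul_eq_mul]⟩
  · rintro ⟨n, rfl⟩; exact ⟨n, by simp [zsmul_eq_mul]⟩

lemma pm_one_of_span_eq {Q : ℚ} (h : Submodule.span ℤ {Q} = Submodule.span ℤ {(1 : ℚ)}) :
    ∃ q : ℤ, Q = (q : ℚ) ∧ (q = 1 ∨ q = -1) := by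
  have h1 : Q ∈ Submodule.span ℤ {(1 : ℚ)} := h ▸ Submodule.mem_span_singleton_self Q
  obtain ⟨q, hq⟩ := mem_span_one.mp h1
  have h2 : (1 : ℚ) ∈ Submodule.span ℤ {Q} := h.symm ▸ Submodule.mem_span_singleton_self 1
  obtain ⟨n, hn⟩ := Submodule.mem_span_singleton.mp h2
  rw [← hq, zsmul_eq_mul] at hn
  have hnq : n * q = 1 := by exact_mod_cast hn
  exact ⟨q, hq.symm, Int.isUnit_iff.mp (IsUnit.of_mul_eq_one (a := q) n (by rw [mul_comm]; exact hnq))⟩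

lemma O_mul_comm_fix (m : ℕ) {a : Submodule ℤ (ℚ × ℚ)} (ρ : ℚ × ℚ)
    (hOa : quadOrder (ℚ × ℚ) m * a = a) :
    quadOrder (ℚ × ℚ) m * (sp ρ * a) = sp ρ * a := by
  rw [← mul_assoc, mul_comm (quadOrder (ℚ × ℚ) m) (sp ρ), mul_assoc, hOa]

lemma zero_m_mem_O (m : ℕ) : (((0 : ℚ), (m : ℚ)) : ℚ × ℚ) ∈ quadOrder (ℚ × ℚ) m := by
  rw [mem_O]; exact ⟨0, 1, by push_cast; simp⟩

lemma normalize (m : ℕ) (a b : Submodule ℤ (ℚ × ℚ))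
    (hOa : quadOrder (ℚ × ℚ) m * a = a) (hab : a * b = quadOrder (ℚ × ℚ) m) :
    ∃ ρ : ℚ × ℚ, IsUnit ρ ∧ ∃ t d : ℤ, d ∣ (m : ℤ) ∧
      sp ρ * a = sp ((1 : ℚ), (t : ℚ)) ⊔ sp ((0 : ℚ), (d : ℚ)) ∧
      (sp ρ * a).map (LinearMap.fst ℤ ℚ ℚ) = Submodule.span ℤ {(1 : ℚ)} ∧
      (sp ρ * a).map (LinearMap.snd ℤ ℚ ℚ) = Submodule.span ℤ {(1 : ℚ)} := by
  have hfst : ∀ z ∈ quadOrder (ℚ × ℚ) m, ∃ n : ℤ, (AlgHom.fst ℤ ℚ ℚ) z = (n : ℚ) := by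
    intro z hz
    obtain ⟨p, q, rfl⟩ := (mem_O m).mp hz
    exact ⟨p, rfl⟩
  have hsnd : ∀ z ∈ quadOrder (ℚ × ℚ) m, ∃ n : ℤ, (AlgHom.snd ℤ ℚ ℚ) z = (n : ℚ) := by
    intro z hz
    obtain ⟨p, q, rfl⟩ := (mem_O m).mp hz
    exact ⟨p + q * m, by push_cast; rfl⟩
  obtain ⟨α, hα, hmapα⟩ := exists_span_eq m (AlgHom.fst ℤ ℚ ℚ) hfst a b hab
  obtain ⟨β, hβ, hmapβ⟩ := exists_span_eq m (AlgHom.snd ℤ ℚ ℚ) hsnd a b hab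
  set ρ : ℚ × ℚ := (α⁻¹, β⁻¹) with hρ
  have hρu : IsUnit ρ := by
    refine IsUnit.of_mul_eq_one (α, β) ?_
    ext <;> simp [hρ, inv_mul_cancel₀, hα, hβ]
  set a' : Submodule ℤ (ℚ × ℚ) := sp ρ * a with ha'
  -- projections of a'
  have hfstlin : (AlgHom.fst ℤ ℚ ℚ).toLinearMap = LinearMap.fst ℤ ℚ ℚ := rfl
  have hsndlin : (AlgHom.snd ℤ ℚ ℚ).toLinearMap = LinearMap.snd ℤ ℚ ℚ := rfl
  rw [hfstlin] at hmapα
  rw [hsndlin] at hmapβ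
  have hπ1 : a'.map (LinearMap.fst ℤ ℚ ℚ) = Submodule.span ℤ {(1 : ℚ)} := by
    rw [ha', ← hfstlin, Submodule.map_mul, hfstlin, hmapα, map_sp]
    rw [Submodule.span_mul_span, Set.singleton_mul_singleton]
    simp [hρ, inv_mul_cancel₀ hα]
  have hπ2 : a'.map (LinearMap.snd ℤ ℚ ℚ) = Submodule.span ℤ {(1 : ℚ)} := by
    rw [ha', ← hsndlin, Submodule.map_mul, hsndlin, hmapβ, map_sp]
    rw [Submodule.span_mul_span, Set.singleton_mul_singleton]
    simp [hρ, inv_mul_cancel₀ hβ]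
  -- entries of a' are integers
  have hint : ∀ z ∈ a', ∃ n k : ℤ, z = ((n : ℚ), (k : ℚ)) := by
    intro z hz
    have h1 : z.1 ∈ a'.map (LinearMap.fst ℤ ℚ ℚ) := ⟨z, hz, rfl⟩
    have h2 : z.2 ∈ a'.map (LinearMap.snd ℤ ℚ ℚ) := ⟨z, hz, rfl⟩
    rw [hπ1, mem_span_one] at h1
    rw [hπ2, mem_span_one] at h2
    obtain ⟨n, hn⟩ := h1
    obtain ⟨k, hk⟩ := h2
    exact ⟨n, k, by ext <;> simp [← hn, ← hk]⟩
  -- an element (1, t)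
  have h1mem : (1 : ℚ) ∈ a'.map (LinearMap.fst ℤ ℚ ℚ) := by
    rw [hπ1]; exact Submodule.mem_span_singleton_self 1
  obtain ⟨x, hx, hx1⟩ := h1mem
  obtain ⟨n, t, hnt⟩ := hint x hx
  have hxt : (((1 : ℚ), (t : ℚ)) : ℚ × ℚ) ∈ a' := by
    have : x = ((1 : ℚ), (t : ℚ)) := by
      ext
      · exact hx1.symm ▸ rfl
      · rw [hnt]
    rwa [← this]
  -- an element (s, 1), used to get (0, m) ∈ a'
  have h2mem : (1 : ℚ) ∈ a'.map (LinearMap.snd ℤ ℚ ℚ) := by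
    rw [hπ2]; exact Submodule.mem_span_singleton_self 1
  obtain ⟨y, hy, hy2⟩ := h2mem
  have hOa' : quadOrder (ℚ × ℚ) m * a' = a' := O_mul_comm_fix m ρ hOa
  have h0m : (((0 : ℚ), (m : ℚ)) : ℚ × ℚ) ∈ a' := by
    have hin : ((0 : ℚ), (m : ℚ)) * y ∈ quadOrder (ℚ × ℚ) m * a' :=
      Submodule.mul_mem_mul (zero_m_mem_O m) hy
    rw [hOa'] at hin
    have hy2' : y.2 = 1 := hy2
    have : (((0 : ℚ), (m : ℚ)) : ℚ × ℚ) * y = ((0 : ℚ), (m : ℚ)) := by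
      ext <;> simp [hy2']
    rwa [this] at hin
  -- the ideal J of second coordinates over 0
  set g : ℤ →ₗ[ℤ] ℚ × ℚ := LinearMap.toSpanSingleton ℤ (ℚ × ℚ) ((0 : ℚ), (1 : ℚ)) with hg
  have hgapp : ∀ r : ℤ, g r = ((0 : ℚ), (r : ℚ)) := by
    intro r
    rw [hg, LinearMap.toSpanSingleton_apply, smul_pair]
    simp
  obtain ⟨d, hd⟩ := IsPrincipalIdealRing.principal ((a'.comap g : Submodule ℤ ℤ) : Ideal ℤ)
  have hd' : (a'.comap g : Submodule ℤ ℤ) = Submodule.span ℤ {d} := by rw [hd]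
  have hdm : d ∣ (m : ℤ) := by
    have : (m : ℤ) ∈ a'.comap g := by
      rw [Submodule.mem_comap, hgapp]
      exact_mod_cast h0m
    rw [hd', Submodule.mem_span_singleton] at this
    obtain ⟨k, hk⟩ := this
    exact ⟨k, by rw [← hk, smul_eq_mul, mul_comm]⟩
  have h0d : (((0 : ℚ), (d : ℚ)) : ℚ × ℚ) ∈ a' := by
    have : d ∈ a'.comap g := by rw [hd']; exact Submodule.mem_span_singleton_self d
    rw [Submodule.mem_comap, hgapp] at this
    exact this
  refine ⟨ρ, hρu, t, d, hdm, ?_, hπ1, hπ2⟩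
  apply le_antisymm
  · intro z hz
    obtain ⟨n₁, n₂, rfl⟩ := hint z hz
    have hsub : (((0 : ℚ), ((n₂ - n₁ * t : ℤ) : ℚ)) : ℚ × ℚ) ∈ a' := by
      have h' : ((n₁ : ℚ), (n₂ : ℚ)) - n₁ • ((1 : ℚ), (t : ℚ)) ∈ a' :=
        Submodule.sub_mem a' hz (Submodule.smul_mem a' n₁ hxt)
      have heq : ((n₁ : ℚ), (n₂ : ℚ)) - n₁ • (((1 : ℚ), (t : ℚ)) : ℚ × ℚ) =
          ((0 : ℚ), ((n₂ - n₁ * t : ℤ) : ℚ)) := by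
        rw [smul_pair, Prod.mk_sub_mk]
        ext
        · show (n₁ : ℚ) - (n₁ : ℚ) * 1 = 0
          ring
        · show (n₂ : ℚ) - (n₁ : ℚ) * t = ((n₂ - n₁ * t : ℤ) : ℚ)
          push_cast
          ring
      rwa [heq] at h'
    have : (n₂ - n₁ * t) ∈ a'.comap g := by
      rw [Submodule.mem_comap, hgapp]; exact hsub
    rw [hd', Submodule.mem_span_singleton] at this
    obtain ⟨k, hk⟩ := this
    rw [mem_sup_span_pair]
    refine ⟨n₁, k, ?_⟩
    have hkd : (k : ℚ) * (d : ℚ) = (n₂ : ℚ) - (n₁ : ℚ) * t := by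
      have hkd' : k * d = n₂ - n₁ * t := by rw [← hk, smul_eq_mul]
      exact_mod_cast hkd'
    rw [smul_pair, smul_pair]
    ext
    · simp
    · show (n₁ : ℚ) * t + (k : ℚ) * d = (n₂ : ℚ)
      rw [hkd]; ring
  · rw [sup_le_iff, Submodule.span_singleton_le_iff_mem, Submodule.span_singleton_le_iff_mem]
    exact ⟨hxt, h0d⟩

end QuadSplit

namespace QuadSplit

lemma sp0_eq {a b : ℤ} (h1 : a ∣ b) (h2 : b ∣ a) :
    (sp ((0 : ℚ), (a : ℚ))) = sp ((0 : ℚ), (b : ℚ)) :=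
  le_antisymm (sp0_le_sp0 h2) (sp0_le_sp0 h1)

lemma sp_one_mul (N : Submodule ℤ (ℚ × ℚ)) : (sp (1 : ℚ × ℚ)) * N = N := by
  show Submodule.span ℤ {(1 : ℚ × ℚ)} * N = N
  rw [← Submodule.one_eq_span, one_mul]

set_option maxHeartbeats 1000000 in
lemma aIdeal_mul (m : ℕ) (s t : ℤ) (hs : IsCoprime s (m : ℤ)) :
    aIdeal m s * aIdeal m t = aIdeal m (s * t) := by
  rw [aIdeal, aIdeal, sup_mul_sup]
  have e1 : (((1 : ℚ), (s : ℚ)) : ℚ × ℚ) * ((1 : ℚ), (t : ℚ)) = ((1 : ℚ), ((s * t : ℤ) : ℚ)) := by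
    rw [Prod.mk_mul_mk]; push_cast; ring_nf
  have e2 : (((1 : ℚ), (s : ℚ)) : ℚ × ℚ) * ((0 : ℚ), (m : ℚ)) = ((0 : ℚ), ((s * m : ℤ) : ℚ)) := by
    rw [Prod.mk_mul_mk]; push_cast; ring_nf
  have e3 : (((0 : ℚ), (m : ℚ)) : ℚ × ℚ) * ((1 : ℚ), (t : ℚ)) = ((0 : ℚ), ((t * m : ℤ) : ℚ)) := by
    rw [Prod.mk_mul_mk]; push_cast; ring_nf
  have e4 : (((0 : ℚ), (m : ℚ)) : ℚ × ℚ) * ((0 : ℚ), (m : ℚ)) =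
      ((0 : ℚ), ((m * m : ℤ) : ℚ)) := by
    rw [Prod.mk_mul_mk]; push_cast; ring_nf
  rw [e1, e2, e3, e4, aIdeal]
  apply le_antisymm
  · have l2 : (sp ((0 : ℚ), ((s * m : ℤ) : ℚ))) ≤ sp ((0 : ℚ), ((m : ℤ) : ℚ)) :=
      sp0_le_sp0 ⟨s, mul_comm _ _⟩
    have l3 : (sp ((0 : ℚ), ((t * m : ℤ) : ℚ))) ≤ sp ((0 : ℚ), ((m : ℤ) : ℚ)) :=
      sp0_le_sp0 ⟨t, mul_comm _ _⟩
    have l4 : (sp ((0 : ℚ), ((m * m : ℤ) : ℚ))) ≤ sp ((0 : ℚ), ((m : ℤ) : ℚ)) :=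
      sp0_le_sp0 ⟨m, mul_comm _ _⟩
    have hcast : (((m : ℤ) : ℚ)) = ((m : ℕ) : ℚ) := by push_cast; rfl
    have hc : (sp ((0 : ℚ), ((m : ℤ) : ℚ))) ≤
        (sp ((1 : ℚ), ((s * t : ℤ) : ℚ))) ⊔ sp ((0 : ℚ), ((m : ℕ) : ℚ)) := by
      rw [hcast]; exact le_sup_right
    refine sup_le (sup_le le_sup_left (le_trans l2 hc)) (sup_le (le_trans l3 hc) (le_trans l4 hc))
  · refine sup_le (le_trans le_sup_left le_sup_left) ?_
    rw [Submodule.span_singleton_le_iff_mem]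
    obtain ⟨u, v, huv⟩ := hs
    have hmem : (((0 : ℚ), (m : ℚ)) : ℚ × ℚ) ∈
        (sp ((0 : ℚ), ((s * m : ℤ) : ℚ))) ⊔ (sp ((0 : ℚ), ((m * m : ℤ) : ℚ))) := by
      rw [mem_sup_span_pair]
      refine ⟨u, v, ?_⟩
      rw [smul_pair, smul_pair]
      ext
      · simp
      · show (u : ℚ) * ((s * m : ℤ) : ℚ) + (v : ℚ) * ((m * m : ℤ) : ℚ) = (m : ℚ)
        push_cast
        have h1 : ((u * s + v * (m : ℤ) : ℤ) : ℚ) = ((1 : ℤ) : ℚ) := by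
          rw [huv]
        push_cast at h1
        nlinarith [h1]
    exact (sup_le_sup (le_sup_right : (sp ((0:ℚ), ((s*m : ℤ):ℚ))) ≤ _)
      (le_sup_right : (sp ((0:ℚ), ((m*m : ℤ):ℚ))) ≤ _)) hmem

lemma aIdeal_le_of_dvd (m : ℕ) {s t : ℤ} (h : (m : ℤ) ∣ s - t) : aIdeal m s ≤ aIdeal m t := by
  rw [aIdeal]
  obtain ⟨k, hk⟩ := h
  refine sup_le ?_ ?_ <;> rw [Submodule.span_singleton_le_iff_mem, mem_aIdeal]
  · refine ⟨1, k, ?_⟩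
    have hs : (s : ℚ) = (t : ℚ) + (k : ℚ) * m := by
      have : s = t + m * k := by linarith [hk]
      rw [this]; push_cast; ring
    ext
    · simp
    · show (s : ℚ) = (1 : ℤ) * (t : ℚ) + (k : ℚ) * m
      rw [hs]; push_cast; ring
  · exact ⟨0, 1, by ext <;> push_cast <;> simp⟩

lemma aIdeal_congr (m : ℕ) {s t : ℤ} (h : (m : ℤ) ∣ s - t) : aIdeal m s = aIdeal m t :=
  le_antisymm (aIdeal_le_of_dvd m h) (aIdeal_le_of_dvd m (by
    have := dvd_neg.mpr h; rwa [neg_sub] at this))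

lemma sp_mul_aIdeal (m : ℕ) (t : ℤ) (p q : ℚ) :
    (sp ((p, q) : ℚ × ℚ)) * aIdeal m t = (sp (p, q * t)) ⊔ sp ((0 : ℚ), q * m) := by
  rw [aIdeal, Submodule.mul_sup, sp_mul_sp, sp_mul_sp, Prod.mk_mul_mk, Prod.mk_mul_mk]
  norm_num

end QuadSplit

namespace QuadSplit

lemma mem_sup_pair_iff {x₁ x₂ y₁ y₂ : ℚ} {z : ℚ × ℚ} :
    z ∈ (sp (x₁, x₂)) ⊔ sp (y₁, y₂) ↔
      ∃ a b : ℤ, (a : ℚ) * x₁ + (b : ℚ) * y₁ = z.1 ∧ (a : ℚ) * x₂ + (b : ℚ) * y₂ = z.2 := by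
  rw [mem_sup_span_pair]
  constructor
  · rintro ⟨a, b, rfl⟩
    exact ⟨a, b, by rw [smul_pair, smul_pair]; simp, by rw [smul_pair, smul_pair]; simp⟩
  · rintro ⟨a, b, h1, h2⟩
    refine ⟨a, b, ?_⟩
    rw [smul_pair, smul_pair]
    ext
    · exact h1
    · exact h2

lemma aIdeal_eq_int_cast (m : ℕ) (t : ℤ) :
    aIdeal m t = (sp ((1 : ℚ), (t : ℚ))) ⊔ sp ((0 : ℚ), ((m : ℤ) : ℚ)) := by
  rw [aIdeal]
  norm_num

lemma one_t_mem_aIdeal (m : ℕ) (t : ℤ) : (((1 : ℚ), (t : ℚ)) : ℚ × ℚ) ∈ aIdeal m t := by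
  rw [aIdeal]
  exact Submodule.mem_sup_left (Submodule.mem_span_singleton_self _)

lemma zero_m_mem_aIdeal (m : ℕ) (t : ℤ) : (((0 : ℚ), (m : ℚ)) : ℚ × ℚ) ∈ aIdeal m t := by
  rw [aIdeal]
  exact Submodule.mem_sup_right (Submodule.mem_span_singleton_self _)

lemma part4_fwd (m : ℕ) (hm : 0 < m) (s t : ℤ) (ρ : ℚ × ℚ) (hρ : IsUnit ρ)
    (heq : aIdeal m s = Submodule.span ℤ {ρ} * aIdeal m t) :
    (s : ZMod m) = (t : ZMod m) ∨ (s : ZMod m) = -(t : ZMod m) := by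
  obtain ⟨σ, hσ⟩ := hρ.exists_right_inv
  have hp : ρ.1 ≠ 0 := by
    intro h0; have := congrArg Prod.fst hσ; simp [h0] at this
  have hq : ρ.2 ≠ 0 := by
    intro h0; have := congrArg Prod.snd hσ; simp [h0] at this
  have hρeta : ρ = (ρ.1, ρ.2) := rfl
  have hrw : Submodule.span ℤ {ρ} * aIdeal m t =
      (sp (ρ.1, ρ.2 * t)) ⊔ sp ((0 : ℚ), ρ.2 * m) := by
    rw [hρeta]; exact sp_mul_aIdeal m t ρ.1 ρ.2
  rw [hrw] at heq
  have hm' : (m : ℚ) ≠ 0 := by exact_mod_cast (Nat.cast_ne_zero (R := ℚ)).mpr hm.ne'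
  -- (0, m) in RHS
  have M1 : (((0 : ℚ), (m : ℚ)) : ℚ × ℚ) ∈ (sp (ρ.1, ρ.2 * t)) ⊔ sp ((0 : ℚ), ρ.2 * m) := by
    rw [← heq]; exact zero_m_mem_aIdeal m s
  rw [mem_sup_pair_iff] at M1
  obtain ⟨a, b, hU1, hU2⟩ := M1
  simp only at hU1 hU2
  have ha0 : (a : ℚ) = 0 := by
    have h0 : (a : ℚ) * ρ.1 = 0 := by linear_combination hU1
    rcases mul_eq_zero.mp h0 with h | h
    · exact h
    · exact absurd h hp
  have hbq : (b : ℚ) * ρ.2 = 1 := by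
    refine mul_right_cancel₀ hm' ?_
    linear_combination hU2 - (ρ.2 * (t : ℚ)) * ha0
  -- (0, q m) in LHS
  have M2 : (((0 : ℚ), ρ.2 * (m : ℚ)) : ℚ × ℚ) ∈ aIdeal m s := by
    rw [heq]; exact Submodule.mem_sup_right (Submodule.mem_span_singleton_self _)
  rw [mem_aIdeal] at M2
  obtain ⟨c, e, hce⟩ := M2
  have hc0 : (c : ℚ) = 0 := (congrArg Prod.fst hce).symm
  have hqe' : ρ.2 = (e : ℚ) := by
    have hsnd : ρ.2 * (m : ℚ) = (c : ℚ) * s + (e : ℚ) * m := congrArg Prod.snd hce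
    refine mul_right_cancel₀ hm' ?_
    linear_combination hsnd + (s : ℚ) * hc0
  have hbe : b * e = 1 := by exact_mod_cast hqe' ▸ hbq
  -- (1, s) in RHS
  have M3 : (((1 : ℚ), (s : ℚ)) : ℚ × ℚ) ∈ (sp (ρ.1, ρ.2 * t)) ⊔ sp ((0 : ℚ), ρ.2 * m) := by
    rw [← heq]; exact one_t_mem_aIdeal m s
  rw [mem_sup_pair_iff] at M3
  obtain ⟨a2, b2, hV1, hV2⟩ := M3
  simp only at hV1 hV2
  -- (p, q t) in LHS
  have M4 : (((ρ.1 : ℚ), ρ.2 * (t : ℚ)) : ℚ × ℚ) ∈ aIdeal m s := by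
    rw [heq]; exact Submodule.mem_sup_left (Submodule.mem_span_singleton_self _)
  rw [mem_aIdeal] at M4
  obtain ⟨c2, e2, hc2e2⟩ := M4
  have hpc2 : ρ.1 = (c2 : ℚ) := congrArg Prod.fst hc2e2
  have hqt : ρ.2 * (t : ℚ) = (c2 : ℚ) * s + (e2 : ℚ) * m := congrArg Prod.snd hc2e2
  -- integer equations
  have ha2c2 : a2 * c2 = 1 := by
    have hQ : (a2 : ℚ) * (c2 : ℚ) = 1 := by linear_combination hV1 - (a2 : ℚ) * hpc2
    exact_mod_cast hQ
  have het : e * t = c2 * s + e2 * m := by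
    have : ((e : ℚ)) * t = (c2 : ℚ) * s + (e2 : ℚ) * m := by rw [← hqe']; exact hqt
    exact_mod_cast this
  have hc2pm : c2 = 1 ∨ c2 = -1 := Int.isUnit_iff.mp (IsUnit.of_mul_eq_one (a := c2) a2
    (by rw [mul_comm]; exact ha2c2))
  have hepm : e = 1 ∨ e = -1 := Int.isUnit_iff.mp (IsUnit.of_mul_eq_one (a := e) b
    (by rw [mul_comm]; exact hbe))
  -- s = c2 * e * t - c2 * e2 * m
  have hc22 : c2 * c2 = 1 := by rcases hc2pm with rfl | rfl <;> norm_num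
  have hs_eq : s = c2 * e * t - c2 * e2 * m := by
    linear_combination (-c2) * het - s * hc22
  have hcast : (s : ZMod m) = ((c2 * e : ℤ) : ZMod m) * (t : ZMod m) := by
    have : ((s : ℤ) : ZMod m) = ((c2 * e * t - c2 * e2 * m : ℤ) : ZMod m) := by rw [← hs_eq]
    push_cast [ZMod.natCast_self] at this ⊢
    rw [this]; ring
  have hce2 : c2 * e = 1 ∨ c2 * e = -1 := by
    rcases hc2pm with rfl | rfl <;> rcases hepm with rfl | rfl <;> norm_num
  rcases hce2 with h | h
  · left; rw [hcast, h]; push_cast; ring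
  · right; rw [hcast, h]; push_cast; ring

end QuadSplit

namespace QuadSplit

lemma span_singleton_q_eq (x y : ℚ) :
    Submodule.span ℤ ({x} : Set ℚ) * Submodule.span ℤ {y} = Submodule.span ℤ {x * y} := by
  rw [Submodule.span_mul_span, Set.singleton_mul_singleton]

lemma part3 (m : ℕ) (hm : 0 < m) (a : Submodule ℤ (ℚ × ℚ))
    (h : IsInvertibleIdeal (quadOrder (ℚ × ℚ) m) a) :
    ∃ t : ℤ, IsCoprime t (m : ℤ) ∧
      ∃ ρ : ℚ × ℚ, IsUnit ρ ∧ a = Submodule.span ℤ {ρ} * aIdeal m t := by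
  obtain ⟨hOa, b, hOb, hab⟩ := h
  have hba : b * a = quadOrder (ℚ × ℚ) m := by rw [mul_comm]; exact hab
  obtain ⟨ρ₁, hρ₁u, t, d, hdm, hA, hπ1a, hπ2a⟩ := normalize m a b hOa hab
  obtain ⟨ρ₂, hρ₂u, u, e, hem, hB, hπ1b, hπ2b⟩ := normalize m b a hOb hba
  set ν : ℚ × ℚ := ρ₁ * ρ₂ with hν
  have hABprod : ((sp ρ₁) * a) * ((sp ρ₂) * b) = (sp ν) * quadOrder (ℚ × ℚ) m := by
    rw [mul_mul_mul_comm, sp_mul_sp, hab]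
  have hS : (sp ν) * quadOrder (ℚ × ℚ) m =
      (sp (ν.1, ν.2 * ((1 : ℤ) : ℚ))) ⊔ sp ((0 : ℚ), ν.2 * (m : ℚ)) := by
    rw [quadOrder_eq]
    have : ν = (ν.1, ν.2) := rfl
    rw [this]
    exact sp_mul_aIdeal m 1 ν.1 ν.2
  -- second projection gives ν.2 = ±1
  have hsndlin : (AlgHom.snd ℤ ℚ ℚ).toLinearMap = LinearMap.snd ℤ ℚ ℚ := rfl
  have hfstlin : (AlgHom.fst ℤ ℚ ℚ).toLinearMap = LinearMap.fst ℤ ℚ ℚ := rfl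
  have hπ2prod : (((sp ρ₁) * a) * ((sp ρ₂) * b)).map (LinearMap.snd ℤ ℚ ℚ) =
      Submodule.span ℤ {(1 : ℚ)} := by
    rw [← hsndlin, Submodule.map_mul, hsndlin, hπ2a, hπ2b, span_singleton_q_eq, mul_one]
  have hπ1prod : (((sp ρ₁) * a) * ((sp ρ₂) * b)).map (LinearMap.fst ℤ ℚ ℚ) =
      Submodule.span ℤ {(1 : ℚ)} := by
    rw [← hfstlin, Submodule.map_mul, hfstlin, hπ1a, hπ1b, span_singleton_q_eq, mul_one]
  have hπ2S : ((sp ν) * quadOrder (ℚ × ℚ) m).map (LinearMap.snd ℤ ℚ ℚ) =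
      Submodule.span ℤ {ν.2} := by
    rw [hS, Submodule.map_sup, map_sp, map_sp]
    show Submodule.span ℤ {ν.2 * ((1 : ℤ) : ℚ)} ⊔ Submodule.span ℤ {ν.2 * (m : ℚ)} = _
    have h1 : ν.2 * ((1 : ℤ) : ℚ) = ν.2 := by push_cast; ring
    rw [h1]
    refine sup_eq_left.mpr ?_
    rw [Submodule.span_singleton_le_iff_mem, Submodule.mem_span_singleton]
    exact ⟨m, by push_cast [zsmul_eq_mul]; ring⟩
  have hπ1S : ((sp ν) * quadOrder (ℚ × ℚ) m).map (LinearMap.fst ℤ ℚ ℚ) =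
      Submodule.span ℤ {ν.1} := by
    rw [hS, Submodule.map_sup, map_sp, map_sp]
    show Submodule.span ℤ {ν.1} ⊔ Submodule.span ℤ {(0 : ℚ)} = _
    refine sup_eq_left.mpr ?_
    rw [Submodule.span_singleton_le_iff_mem]
    exact Submodule.zero_mem _
  obtain ⟨q, hq, hqpm⟩ := pm_one_of_span_eq (by rw [← hπ2S, ← hABprod, hπ2prod] : Submodule.span ℤ {ν.2} = Submodule.span ℤ {(1 : ℚ)})
  obtain ⟨p, hp, hppm⟩ := pm_one_of_span_eq (by rw [← hπ1S, ← hABprod, hπ1prod] : Submodule.span ℤ {ν.1} = Submodule.span ℤ {(1 : ℚ)})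
  -- generators of A', B'
  have hAt : (((1 : ℚ), (t : ℚ)) : ℚ × ℚ) ∈ (sp ρ₁) * a := by
    rw [hA]; exact Submodule.mem_sup_left (Submodule.mem_span_singleton_self _)
  have hAd : (((0 : ℚ), (d : ℚ)) : ℚ × ℚ) ∈ (sp ρ₁) * a := by
    rw [hA]; exact Submodule.mem_sup_right (Submodule.mem_span_singleton_self _)
  have hBu : (((1 : ℚ), (u : ℚ)) : ℚ × ℚ) ∈ (sp ρ₂) * b := by
    rw [hB]; exact Submodule.mem_sup_left (Submodule.mem_span_singleton_self _)
  have hBe : (((0 : ℚ), (e : ℚ)) : ℚ × ℚ) ∈ (sp ρ₂) * b := by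
    rw [hB]; exact Submodule.mem_sup_right (Submodule.mem_span_singleton_self _)
  have hSmem : ∀ z : ℚ × ℚ, z ∈ ((sp ρ₁) * a) * ((sp ρ₂) * b) →
      ∃ a' b' : ℤ, (a' : ℚ) * ν.1 + (b' : ℚ) * 0 = z.1 ∧
        (a' : ℚ) * (ν.2 * ((1 : ℤ) : ℚ)) + (b' : ℚ) * (ν.2 * (m : ℚ)) = z.2 := by
    intro z hz
    rw [hABprod, hS] at hz
    rw [mem_sup_pair_iff] at hz
    exact hz
  -- (1, t u)
  obtain ⟨a1, b1, hG1f, hG1s⟩ := hSmem _ (Submodule.mul_mem_mul hAt hBu)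
  -- (0, t e)
  obtain ⟨a2, b2, hG2f, hG2s⟩ := hSmem _ (Submodule.mul_mem_mul hAt hBe)
  -- (0, d u)
  obtain ⟨a3, b3, hG3f, hG3s⟩ := hSmem _ (Submodule.mul_mem_mul hAd hBu)
  simp only [Prod.mk_mul_mk, mul_one, one_mul, mul_zero, zero_mul] at hG1f hG1s hG2f hG2s hG3f hG3s
  simp only [hp, hq] at hG1f hG1s hG2f hG2s hG3f hG3s
  -- integer forms
  have hA1 : a1 * p = 1 := by exact_mod_cast (by linear_combination hG1f :
    (a1 : ℚ) * (p : ℚ) = 1)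
  have hG1 : a1 * q + b1 * q * m = t * u := by exact_mod_cast (by push_cast; linear_combination hG1s :
    ((a1 * q + b1 * q * m : ℤ) : ℚ) = ((t * u : ℤ) : ℚ))
  have hA2 : (a2 : ℚ) = 0 := by
    have hp0 : (p : ℚ) ≠ 0 := by
      rcases hppm with rfl | rfl <;> norm_num
    have h0 : (a2 : ℚ) * (p : ℚ) = 0 := by linear_combination hG2f
    rcases mul_eq_zero.mp h0 with h | h
    · exact h
    · exact absurd h hp0
  have ha2z : a2 = 0 := by exact_mod_cast hA2
  have hG2 : b2 * q * m = t * e := by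
    have : ((b2 * q * m : ℤ) : ℚ) = ((t * e : ℤ) : ℚ) := by
      push_cast
      rw [ha2z] at hG2s
      push_cast at hG2s
      linear_combination hG2s
    exact_mod_cast this
  have hA3 : a3 = 0 := by
    have hp0 : (p : ℚ) ≠ 0 := by
      rcases hppm with rfl | rfl <;> norm_num
    have h0 : (a3 : ℚ) * (p : ℚ) = 0 := by linear_combination hG3f
    rcases mul_eq_zero.mp h0 with h | h
    · exact_mod_cast h
    · exact absurd h hp0
  have hG3 : b3 * q * m = d * u := by
    have : ((b3 * q * m : ℤ) : ℚ) = ((d * u : ℤ) : ℚ) := by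
      push_cast
      rw [hA3] at hG3s
      push_cast at hG3s
      linear_combination hG3s
    exact_mod_cast this
  -- coprimality
  have ha1p : a1 * a1 = 1 := by
    have : a1 = p := by rcases hppm with rfl | rfl <;> omega
    rw [this]; rcases hppm with rfl | rfl <;> norm_num
  have hq2 : q * q = 1 := by rcases hqpm with rfl | rfl <;> norm_num
  have hcopt : IsCoprime t (m : ℤ) :=
    ⟨a1 * q * u, -(a1 * q * b1 * q), by linear_combination (-(a1 * q)) * hG1 + (q * q) * ha1p + hq2⟩
  have hcopu : IsCoprime u (m : ℤ) :=
    ⟨a1 * q * t, -(a1 * q * b1 * q), by linear_combination (-(a1 * q)) * hG1 + (q * q) * ha1p + hq2⟩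
  -- m ∣ d
  have hmdu : (m : ℤ) ∣ d * u := ⟨b3 * q, by linear_combination -hG3⟩
  have hmd : (m : ℤ) ∣ d := (hcopu.symm).dvd_of_dvd_mul_right hmdu
  -- conclude A' = aIdeal m t
  have hAeq : (sp ρ₁) * a = aIdeal m t := by
    rw [hA, aIdeal_eq_int_cast, sp0_eq hdm hmd]
  -- invert ρ₁
  obtain ⟨U, hU⟩ := hρ₁u
  refine ⟨t, hcopt, (↑U⁻¹ : ℚ × ℚ), Units.isUnit _, ?_⟩
  have hfinal : (sp ((↑U⁻¹ : ℚ × ℚ))) * ((sp ρ₁) * a) = a := by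
    rw [← mul_assoc, sp_mul_sp]
    have h1 : (↑U⁻¹ : ℚ × ℚ) * ρ₁ = 1 := by rw [← hU]; exact Units.inv_mul U
    rw [h1, sp_one_mul]
  rw [← hAeq, hfinal]

end QuadSplit

namespace QuadSplit

lemma part4_bwd (m : ℕ) (s t : ℤ)
    (h : (s : ZMod m) = (t : ZMod m) ∨ (s : ZMod m) = -(t : ZMod m)) :
    ∃ ρ : ℚ × ℚ, IsUnit ρ ∧ aIdeal m s = Submodule.span ℤ {ρ} * aIdeal m t := by
  rcases h with h | h
  · refine ⟨1, isUnit_one, ?_⟩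
    rw [sp_one_mul (aIdeal m t)]
    have hmod : (m : ℤ) ∣ t - s := Int.ModEq.dvd ((ZMod.intCast_eq_intCast_iff s t m).mp h)
    exact aIdeal_congr m (by
      have := dvd_neg.mpr hmod; rwa [neg_sub] at this)
  · refine ⟨((1 : ℚ), (-1 : ℚ)), ?_, ?_⟩
    · refine IsUnit.of_mul_eq_one ((1 : ℚ), (-1 : ℚ)) ?_
      ext <;> norm_num
    · have hmod : (s : ZMod m) = ((-t : ℤ) : ZMod m) := by push_cast; exact h
      have hdvd : (m : ℤ) ∣ s - (-t) := by
        have h' := Int.ModEq.dvd ((ZMod.intCast_eq_intCast_iff s (-t) m).mp hmod)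
        have := dvd_neg.mpr h'
        rwa [neg_sub] at this
      rw [aIdeal_congr m hdvd, sp_mul_aIdeal m t 1 (-1)]
      have e1 : (((1 : ℚ), (-1 : ℚ) * (t : ℚ)) : ℚ × ℚ) = ((1 : ℚ), ((-t : ℤ) : ℚ)) := by
        ext
        · rfl
        · show (-1 : ℚ) * t = ((-t : ℤ) : ℚ)
          push_cast; ring
      have e2 : (((0 : ℚ), (-1 : ℚ) * (m : ℚ)) : ℚ × ℚ) = ((0 : ℚ), ((-(m : ℤ) : ℤ) : ℚ)) := by
        ext
        · rfl
        · show (-1 : ℚ) * m = ((-(m : ℤ) : ℤ) : ℚ)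
          push_cast; ring
      rw [e1, e2, aIdeal_eq_int_cast]
      congr 1
      exact sp0_eq ⟨-1, by ring⟩ ⟨-1, by ring⟩

end QuadSplit

/-- The ideal class group of the order `O_{ℚ²,m} = ℤ·(1,1) + m·(ℤ × ℤ)` in
`ℚ × ℚ` is isomorphic to `(ℤ/mℤ)* / {±1}` via the class of
`a_t = ℤ·(1,t) + ℤ·(0,m)` (for `t` prime to `m`) ↦ `±t mod m`.  Unfolded:
`a_1 = O_{ℚ²,m}`; `a_s·a_t = a_{st}`; every invertible fractional
`O_{ℚ²,m}`-ideal is equivalent to some `a_t` with `gcd(t,m) = 1`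
(surjectivity); and `a_s`, `a_t` are in the same class iff `s ≡ ±t mod m`
(well-definedness and injectivity). -/
theorem classGroup_split_quadratic_order
    (m : ℕ) (hm : 0 < m) :
    aIdeal m 1 = quadOrder (ℚ × ℚ) m ∧
    (∀ s t : ℤ, IsCoprime s (m : ℤ) → IsCoprime t (m : ℤ) →
      aIdeal m s * aIdeal m t = aIdeal m (s * t)) ∧
    (∀ a : Submodule ℤ (ℚ × ℚ), IsInvertibleIdeal (quadOrder (ℚ × ℚ) m) a →
      ∃ t : ℤ, IsCoprime t (m : ℤ) ∧
        ∃ ρ : ℚ × ℚ, IsUnit ρ ∧ a = Submodule.span ℤ {ρ} * aIdeal m t) ∧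
    (∀ s t : ℤ, IsCoprime s (m : ℤ) → IsCoprime t (m : ℤ) →
      ((∃ ρ : ℚ × ℚ, IsUnit ρ ∧ aIdeal m s = Submodule.span ℤ {ρ} * aIdeal m t)
        ↔ ((s : ZMod m) = (t : ZMod m) ∨ (s : ZMod m) = -(t : ZMod m)))) := by
  refine ⟨(QuadSplit.quadOrder_eq m).symm,
    fun s t hs _ => QuadSplit.aIdeal_mul m s t hs,
    fun a ha => QuadSplit.part3 m hm a ha,
    fun s t _ _ => ⟨?_, QuadSplit.part4_bwd m s t⟩⟩
  rintro ⟨ρ, hρ, heq⟩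
  exact QuadSplit.part4_fwd m hm s t ρ hρ heq
end

section
/- Lemma A.1: Let k be a number field, 𝔪 = 𝔪₀𝔪_∞ a modulus, A = k^{n+1}, and O_{A,𝔪} = O_k·1 + 𝔪₀·O_A. If ã and b̃ are integral O_{A,𝔪}-ideals prime to 𝔪₀O_A, and γ = (γ₀,…,γ_n) ∈ A* is equivariant modulo 𝔪_∞ (i.e., σ(γᵢ/γ₀) > 0 for all 1 ≤ i ≤ n and σ ∈ 𝔪_∞) with b̃ = γ·ã, then γᵢ/γ₀ ≡ 1 (mod* 𝔪) for all 1 ≤ i ≤ n. -/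
set_option synthInstance.maxHeartbeats 1000000


open NumberField

/-- Auxiliary: an integral `O_{A,𝔪}`-ideal prime to `𝔪₀ O_A` contains a constant
vector `(C,…,C)` with `C ≡ 1 mod 𝔪₀`. -/
lemma exists_const_mem_of_prime_to_m0
    (k : Type*) [Field k] [NumberField k] (n : ℕ)
    (m0 : Ideal (𝓞 k)) (J : Set (Fin (n + 1) → k))
    (hJsmul : ∀ r : Fin (n + 1) → k,
      ((∀ i, IsIntegral ℤ (r i)) ∧
        ∀ i, ∃ w ∈ m0, algebraMap (𝓞 k) k w = r i - r 0) →
      ∀ x ∈ J, r * x ∈ J)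
    (hJprime : ∀ z : Fin (n + 1) → k,
      ((∀ i, IsIntegral ℤ (z i)) ∧
        ∀ i, ∃ w ∈ m0, algebraMap (𝓞 k) k w = z i - z 0) →
      ∃ x ∈ J, ∃ y : Fin (n + 1) → k,
        (∀ i, ∃ w ∈ m0, algebraMap (𝓞 k) k w = y i) ∧ z = x + y) :
    ∃ C : 𝓞 k, Ideal.Quotient.mk m0 C = 1 ∧
      (fun _ : Fin (n + 1) => algebraMap (𝓞 k) k C) ∈ J := by
  obtain ⟨x, hxJ, y, hy, hxy⟩ := hJprime (fun _ => 1)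
    ⟨fun i => isIntegral_one, fun i => ⟨0, m0.zero_mem, by simp⟩⟩
  choose w hw hfw using hy
  set X : Fin (n + 1) → 𝓞 k := fun l => 1 - w l with hX
  have hmkX : ∀ l, Ideal.Quotient.mk m0 (X l) = 1 := by
    intro l
    have h0 : Ideal.Quotient.mk m0 (w l) = 0 := Ideal.Quotient.eq_zero_iff_mem.2 (hw l)
    simp [hX, h0]
  have hfX : ∀ l, algebraMap (𝓞 k) k (X l) = x l := by
    intro l
    have h1 : (1 : k) = x l + y l := congrFun hxy l
    rw [hX]
    simp only [map_sub, map_one, hfw l]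
    rw [h1]; ring
  set Rr : Fin (n + 1) → 𝓞 k := fun j => X 0 * ∏ l ∈ Finset.univ.erase j, X l with hRr
  have hmkRr : ∀ j, Ideal.Quotient.mk m0 (Rr j) = 1 := by
    intro j
    simp [hRr, map_mul, map_prod, hmkX]
  refine ⟨X 0 * ∏ l, X l, by simp [map_mul, map_prod, hmkX], ?_⟩
  have hv := hJsmul (fun j => algebraMap (𝓞 k) k (Rr j))
    ⟨fun j => RingOfIntegers.isIntegral_coe _,
     fun j => ⟨Rr j - Rr 0, by
        rw [← Ideal.Quotient.eq_zero_iff_mem, map_sub, hmkRr, hmkRr, sub_self],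
      by simp [map_sub]⟩⟩ x hxJ
  have heq : (fun _ : Fin (n + 1) => algebraMap (𝓞 k) k (X 0 * ∏ l, X l))
      = (fun j => algebraMap (𝓞 k) k (Rr j)) * x := by
    funext j
    show algebraMap (𝓞 k) k (X 0 * ∏ l, X l) = algebraMap (𝓞 k) k (Rr j) * x j
    rw [← hfX j, ← map_mul]
    congr 1
    rw [← Finset.mul_prod_erase Finset.univ X (Finset.mem_univ j), hRr]
    ring
  rw [heq]
  exact hv

/-- Lemma A.1: let `k` be a number field, `𝔪 = 𝔪₀𝔪_∞` a modulus
(`𝔪₀` a nonzero integral ideal, `𝔪_∞` a set of real embeddings),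
`A = k^{n+1}`, and `O_{A,𝔪} = O_k·1 + 𝔪₀·O_A`, i.e.
`{α ∈ O_A : αᵢ ≡ α₀ mod 𝔪₀ for all i}`.  If `J` and `J'` are integral
`O_{A,𝔪}`-ideals prime to `𝔪₀O_A`, and `γ = (γ₀,…,γ_n) ∈ A*` is
equivariant modulo `𝔪_∞` (i.e. `σ(γᵢ/γ₀) > 0` for all `i` and `σ ∈ 𝔪_∞`)
with `J' = γ·J`, then `γᵢ/γ₀ ≡ 1 (mod* 𝔪)` for all `i`; here
`α ≡ 1 (mod* 𝔪)` is expressed as: `α = β/δ` with `β, δ ∈ O_k`, `δ` prime to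
`𝔪₀`, `β − δ ∈ 𝔪₀`, and `σ(α) > 0` for all `σ ∈ 𝔪_∞`. -/
theorem equivariant_scaling_congruence
    (k : Type*) [Field k] [NumberField k] (n : ℕ)
    (m0 : Ideal (𝓞 k)) (hm0 : m0 ≠ ⊥)
    (minf : Set (k →+* ℝ))
    (J J' : Set (Fin (n + 1) → k))
    -- `J` is an integral ideal of `O_{A,𝔪}`:
    (hJint : ∀ x ∈ J, (∀ i, IsIntegral ℤ (x i)) ∧
      ∀ i, ∃ w ∈ m0, algebraMap (𝓞 k) k w = x i - x 0)
    (hJadd : ∀ x ∈ J, ∀ y ∈ J, x + y ∈ J)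
    (hJsmul : ∀ r : Fin (n + 1) → k,
      ((∀ i, IsIntegral ℤ (r i)) ∧
        ∀ i, ∃ w ∈ m0, algebraMap (𝓞 k) k w = r i - r 0) →
      ∀ x ∈ J, r * x ∈ J)
    -- `J` is prime to `𝔪₀ O_A`:
    (hJprime : ∀ z : Fin (n + 1) → k,
      ((∀ i, IsIntegral ℤ (z i)) ∧
        ∀ i, ∃ w ∈ m0, algebraMap (𝓞 k) k w = z i - z 0) →
      ∃ x ∈ J, ∃ y : Fin (n + 1) → k,
        (∀ i, ∃ w ∈ m0, algebraMap (𝓞 k) k w = y i) ∧ z = x + y)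
    -- same for `J'`:
    (hJ'int : ∀ x ∈ J', (∀ i, IsIntegral ℤ (x i)) ∧
      ∀ i, ∃ w ∈ m0, algebraMap (𝓞 k) k w = x i - x 0)
    (hJ'add : ∀ x ∈ J', ∀ y ∈ J', x + y ∈ J')
    (hJ'smul : ∀ r : Fin (n + 1) → k,
      ((∀ i, IsIntegral ℤ (r i)) ∧
        ∀ i, ∃ w ∈ m0, algebraMap (𝓞 k) k w = r i - r 0) →
      ∀ x ∈ J', r * x ∈ J')
    (hJ'prime : ∀ z : Fin (n + 1) → k,
      ((∀ i, IsIntegral ℤ (z i)) ∧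
        ∀ i, ∃ w ∈ m0, algebraMap (𝓞 k) k w = z i - z 0) →
      ∃ x ∈ J', ∃ y : Fin (n + 1) → k,
        (∀ i, ∃ w ∈ m0, algebraMap (𝓞 k) k w = y i) ∧ z = x + y)
    -- `γ ∈ A*`, equivariant modulo `𝔪_∞`, with `J' = γ·J`:
    (γ : Fin (n + 1) → k) (hγunit : ∀ i, γ i ≠ 0)
    (hγequiv : ∀ i, ∀ σ ∈ minf, 0 < σ (γ i / γ 0))
    (hscale : J' = (fun x => γ * x) '' J) :
    ∀ i, (∃ β δ : 𝓞 k, (Ideal.span {δ} ⊔ m0 = ⊤) ∧ β - δ ∈ m0 ∧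
        algebraMap (𝓞 k) k β / algebraMap (𝓞 k) k δ = γ i / γ 0) ∧
      ∀ σ ∈ minf, 0 < σ (γ i / γ 0) := by
  intro i
  refine ⟨?_, hγequiv i⟩
  by_cases htop : m0 = ⊤
  · obtain ⟨a, b, hb, h⟩ := IsFractionRing.div_surjective (A := 𝓞 k) (γ i / γ 0)
    exact ⟨a, b, by simp [htop], by simp [htop], h⟩
  -- the modulus is proper
  haveI : Nontrivial ((𝓞 k) ⧸ m0) := Ideal.Quotient.nontrivial_iff.mpr htop
  have hfinj : Function.Injective (algebraMap (𝓞 k) k) := IsFractionRing.injective _ _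
  obtain ⟨C, hmkC, hCJ⟩ :=
    exists_const_mem_of_prime_to_m0 k n m0 J hJsmul hJprime
  obtain ⟨D, hmkD, hDJ'⟩ :=
    exists_const_mem_of_prime_to_m0 k n m0 J' hJ'smul hJ'prime
  have hC0 : C ≠ 0 := by
    intro h
    have h01 : (0 : (𝓞 k) ⧸ m0) = 1 := by
      rw [← map_zero (Ideal.Quotient.mk m0), ← h]; exact hmkC
    exact zero_ne_one h01
  have hfC0 : algebraMap (𝓞 k) k C ≠ 0 := fun h => hC0 (hfinj (by simpa using h))
  -- the vector `γ * (C,…,C)` lies in `J'`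
  have hmem : γ * (fun _ : Fin (n + 1) => algebraMap (𝓞 k) k C) ∈ J' := by
    rw [hscale]; exact ⟨_, hCJ, rfl⟩
  obtain ⟨hint, hcong⟩ := hJ'int _ hmem
  -- the numerator and denominator
  set B : Fin (n + 1) → 𝓞 k := fun j => ⟨γ j * algebraMap (𝓞 k) k C, hint j⟩ with hB
  have hfB : ∀ j, algebraMap (𝓞 k) k (B j) = γ j * algebraMap (𝓞 k) k C := fun j => rfl
  -- the constant vector `(D,…,D)` in `J'` comes from some `u ∈ J`
  obtain ⟨u, huJ, hu⟩ : ∃ u ∈ J, γ * u = fun _ : Fin (n + 1) => algebraMap (𝓞 k) k D := by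
    rw [hscale] at hDJ'; obtain ⟨u, huJ, hu⟩ := hDJ'; exact ⟨u, huJ, hu⟩
  set U : Fin (n + 1) → 𝓞 k := fun j => ⟨u j, (hJint u huJ).1 j⟩ with hU
  have hud : γ 0 * u 0 = algebraMap (𝓞 k) k D := congrFun hu 0
  -- `B 0 * U 0 = C * D ≡ 1`, so `B 0` is prime to `m0`
  have hkey : B 0 * U 0 = C * D := by
    apply hfinj
    rw [map_mul, map_mul, hfB]
    show γ 0 * algebraMap (𝓞 k) k C * u 0 = _
    rw [mul_comm (γ 0) _, mul_assoc, hud]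
  have hBU1 : B 0 * U 0 - 1 ∈ m0 := by
    rw [← Ideal.Quotient.eq_zero_iff_mem, map_sub, map_one, hkey, map_mul, hmkC, hmkD,
      mul_one, sub_self]
  refine ⟨B i, B 0, ?_, ?_, ?_⟩
  · rw [Ideal.eq_top_iff_one]
    refine Submodule.mem_sup.2 ⟨B 0 * U 0, Ideal.mem_span_singleton.2 ⟨U 0, rfl⟩,
      1 - B 0 * U 0, ?_, by ring⟩
    simpa [neg_sub] using m0.neg_mem hBU1
  · obtain ⟨wc, hwc, hfwc⟩ := hcong i
    have : wc = B i - B 0 := by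
      apply hfinj
      rw [map_sub, hfB, hfB, hfwc]
      show (γ * (fun _ : Fin (n+1) => algebraMap (𝓞 k) k C)) i - (γ * (fun _ : Fin (n+1) => algebraMap (𝓞 k) k C)) 0 = _
      simp [Pi.mul_apply]
    rw [← this]; exact hwc
  · rw [hfB, hfB, mul_div_mul_right _ _ hfC0]
end

section
/- Compatible inverse system conductor: let (I, ≺) be a partially ordered set in which each element has finitely many predecessors, and let ((A_i), (φ_{ij})) be a compatible inverse system of finite abelian groups with surjective transition maps satisfying φ_{ii} = id, φ_{im} = φ_{ij}∘φ_{jm}, and for i ≺ m, j ≺ m there exists l ≺ i, l ≺ j with Ker φ_{im} · Ker φ_{jm} = Ker φ_{lm}. Then every subgroup H of A_j is induced by a unique subgroup H₁ of A_f for a unique minimal index f (the conductor of H), i.e., H = φ_{fj}⁻¹(H₁), and H₁ is not induced by any subgroup of any A_{i} with i ≺ f, i ≠ f. -/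
/-- Compatible inverse system conductor: let `(I, ≤)` be a partially ordered
set in which each element has finitely many predecessors, and let
`((A i), (φ i j))` be a compatible inverse system of finite abelian groups
with surjective transition maps satisfying `φ i i = id`,
`φ i m = φ i j ∘ φ j m`, and the kernel compatibility axiom: for `i ≤ m`,
`j ≤ m` there is `l ≤ i`, `l ≤ j` with `Ker φ i m · Ker φ j m = Ker φ l m`.
Then every subgroup `H` of `A j` is induced from a unique subgroup `H₁` of
`A f` for a unique minimal index `f ≤ j` (the conductor of `H`):
`H = (φ f j)⁻¹(H₁)`, and any index `i ≤ j` from which `H` is induced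
satisfies `f ≤ i` (so `H₁` is not induced from any `A i` with `i < f`). -/
theorem conductor_of_compatible_inverse_system
    {I : Type*} [PartialOrder I]
    (hfin : ∀ j : I, {i : I | i ≤ j}.Finite)
    (A : I → Type*) [∀ i, CommGroup (A i)] [∀ i, Finite (A i)]
    (φ : ∀ i j : I, i ≤ j → (A j →* A i))
    (hsurj : ∀ i j (h : i ≤ j), Function.Surjective (φ i j h))
    (hid : ∀ i, φ i i le_rfl = MonoidHom.id (A i))
    (hcomp : ∀ i j m (hij : i ≤ j) (hjm : j ≤ m),
      φ i m (hij.trans hjm) = (φ i j hij).comp (φ j m hjm))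
    (hker : ∀ i j m (hi : i ≤ m) (hj : j ≤ m),
      ∃ l, ∃ hli : l ≤ i, ∃ hlj : l ≤ j,
        (φ i m hi).ker ⊔ (φ j m hj).ker = (φ l m (hli.trans hi)).ker)
    (j : I) (H : Subgroup (A j)) :
    ∃! f : I, ∃ hf : f ≤ j,
      (∃! H₁ : Subgroup (A f), H = H₁.comap (φ f j hf)) ∧
      ∀ i (hi : i ≤ j), (∃ H₂ : Subgroup (A i), H = H₂.comap (φ i j hi)) →
        f ≤ i := by
    classical
  -- characterization: H induced from i iff ker ≤ H
  have key : ∀ i (hi : i ≤ j),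
      (∃ H₂ : Subgroup (A i), H = H₂.comap (φ i j hi)) ↔ (φ i j hi).ker ≤ H := by
    intro i hi
    constructor
    · rintro ⟨H₂, rfl⟩
      intro x hx
      simp only [MonoidHom.mem_ker] at hx
      have h1 := H₂.one_mem
      simp [Subgroup.mem_comap, hx, h1]
    · intro hk
      refine ⟨H.map (φ i j hi), ?_⟩
      rw [Subgroup.comap_map_eq, sup_eq_left.2 hk]
  set S : Set I := {i | ∃ hi : i ≤ j, (φ i j hi).ker ≤ H} with hS
  have hjS : j ∈ S := ⟨le_rfl, by rw [hid]; simp⟩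
  have hSfin : S.Finite := (hfin j).subset (fun i ⟨hi, _⟩ => hi)
  obtain ⟨f, hfS, hfmin⟩ : ∃ f ∈ S, ∀ a' ∈ S, id a' ≤ id f → id f = id a' := by
    obtain ⟨f, hfS, hm⟩ := Set.Finite.exists_minimalFor id S hSfin ⟨j, hjS⟩
    exact ⟨f, hfS, fun a ha h => le_antisymm (hm ha h) h⟩
  obtain ⟨hfj, hfker⟩ := hfS
  -- f is a lower bound of S
  have hlb : ∀ i ∈ S, f ≤ i := by
    rintro i ⟨hij, hik⟩
    obtain ⟨l, hlf, hli, hl⟩ := hker f i j hfj hij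
    have hlS : l ∈ S := ⟨hlf.trans hfj, by rw [← hl]; exact sup_le hfker hik⟩
    have h2 := hfmin l hlS hlf
    simp only [id] at h2
    exact le_of_eq h2 |>.trans hli
  refine ⟨f, ⟨hfj, ?_, fun i hi h2 => hlb i ⟨hi, (key i hi).1 h2⟩⟩, ?_⟩
  · refine ⟨H.map (φ f j hfj), ?_, ?_⟩
    · show H = _
      rw [Subgroup.comap_map_eq, sup_eq_left.2 hfker]
    · rintro K hK
      rw [show H = Subgroup.comap (φ f j hfj) K from hK]
      exact (Subgroup.map_comap_eq_self_of_surjective (hsurj f j hfj) K).symm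
  · rintro g ⟨hgj, ⟨H₁, hH₁, -⟩, hgmin⟩
    have hgS : g ∈ S := ⟨hgj, (key g hgj).1 ⟨H₁, hH₁⟩⟩
    exact le_antisymm (hgmin f hfj ⟨H.map (φ f j hfj),
      by rw [Subgroup.comap_map_eq, sup_eq_left.2 hfker]⟩) (hlb g hgS)
end
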